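/- Let Z = (z_1,…,z_ℓ) ∈ 𝒳^ℓ be any fixed tuple, let P_Z denote the orthogonal projection of H onto span{φ(z_1),…,φ(z_ℓ)}, and P_Z^⊥ := I − P_Z. Then ∫_𝒳 (k(x,x) − k^Z(x,x)) dμ(x) = ∫_𝒳 ‖P_Z^⊥ φ(x)‖_H² dμ(x) = ∑_{i=1}^∞ σ_i ‖P_Z^⊥ h_i‖_H², and for every integer m ≥ 0 this quantity is at most ∑_{i=1}^m σ_i ‖P_Z^⊥ h_i‖_H² + ∑_{i>m} σ_i. (The quantity σ_i ‖P_Z^⊥ h_i‖² equals ‖P_Z^⊥ 𝒦 e_i‖², where 𝒦 e_i corresponds to √σ_i h_i.) -/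

import Mathlib

open scoped RealInnerProductSpace BigOperators
open Matrix MeasureTheory

/-- `B` is the Moore–Penrose pseudo-inverse of `A`. -/
def IsMoorePenrose {m n : Type*} [Fintype m] [Fintype n]
    (A : Matrix m n ℝ) (B : Matrix n m ℝ) : Prop :=
  A * B * A = A ∧ B * A * B = B ∧ (A * B)ᵀ = A * B ∧ (B * A)ᵀ = B * A

/-- for a fixed tuple `Z` and the orthogonal projection `P = P_Z`
onto `span{φ(z_1),…,φ(z_ℓ)}`,
`∫ (k(x,x) − k^Z(x,x)) dμ = ∫ ‖P_Z^⊥ φ(x)‖² dμ = ∑ σ_i ‖P_Z^⊥ h_i‖²`, and for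
every `m` this is at most `∑_{i=1}^m σ_i ‖P_Z^⊥ h_i‖² + ∑_{i>m} σ_i`.
(0-indexed: `σ 0` is the first Mercer eigenvalue.) -/
theorem stmt6
    {𝒳 : Type*} [MeasurableSpace 𝒳] (μ : Measure 𝒳) [IsProbabilityMeasure μ]
    {H : Type*} [NormedAddCommGroup H] [InnerProductSpace ℝ H] [CompleteSpace H]
    (φ : 𝒳 → H) (hφ : StronglyMeasurable φ)
    (k : 𝒳 → 𝒳 → ℝ) (hk : ∀ x y, k x y = ⟪φ x, φ y⟫)
    (hkint : Integrable (fun x => k x x) μ)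
    (h : ℕ → H) (hon : Orthonormal ℝ h)
    (hspan : ∀ x, φ x ∈ (Submodule.span ℝ (Set.range h)).topologicalClosure)
    (horth : ∀ i j, i ≠ j → ∫ x, ⟪h i, φ x⟫ * ⟪h j, φ x⟫ ∂μ = 0)
    (σ : ℕ → ℝ) (hσ : ∀ i, σ i = ∫ x, ⟪h i, φ x⟫ ^ 2 ∂μ)
    (hσmono : ∀ i j, i ≤ j → σ j ≤ σ i) (hσsum : Summable σ)
    (ℓ : ℕ) (Z : Fin ℓ → 𝒳)
    (G : Matrix (Fin ℓ) (Fin ℓ) ℝ) (hG : ∀ a b, G a b = k (Z a) (Z b))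
    (Kp : Matrix (Fin ℓ) (Fin ℓ) ℝ) (hKp : IsMoorePenrose G Kp)
    (kZ : 𝒳 → 𝒳 → ℝ)
    (hkZ : ∀ x y, kZ x y = ∑ a, ∑ b, k x (Z a) * Kp a b * k (Z b) y)
    (P : H →L[ℝ] H)
    (hfix : ∀ a, P (φ (Z a)) = φ (Z a))
    (hrange : ∀ v, P v ∈ Submodule.span ℝ (Set.range fun a => φ (Z a)))
    (hsym : ∀ u v, ⟪P u, v⟫ = ⟪u, P v⟫) :
    (∫ x, (k x x - kZ x x) ∂μ) = (∫ x, ‖φ x - P (φ x)‖ ^ 2 ∂μ) ∧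
    (∫ x, (k x x - kZ x x) ∂μ) = (∑' i : ℕ, σ i * ‖h i - P (h i)‖ ^ 2) ∧
    ∀ m : ℕ, (∫ x, (k x x - kZ x x) ∂μ)
      ≤ (∑ i ∈ Finset.range m, σ i * ‖h i - P (h i)‖ ^ 2) + ∑' i : ℕ, σ (m + i) := by
  classical
  -- basic facts about P
  have hPfix : ∀ v ∈ Submodule.span ℝ (Set.range fun a => φ (Z a)), P v = v := by
    intro v hv
    induction hv using Submodule.span_induction with
    | mem x hx => obtain ⟨a, rfl⟩ := hx; exact hfix a
    | zero => simp
    | add x y _ _ hx hy => simp [map_add, hx, hy]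
    | smul c x _ hx => simp [_root_.map_smul, hx]
  have hPP : ∀ v, P (P v) = P v := fun v => hPfix _ (hrange v)
  have hQP : ∀ v w, ⟪v - P v, P w⟫ = 0 := by
    intro v w
    have h1 := hsym (v - P v) w
    rw [map_sub, hPP, sub_self, inner_zero_left] at h1
    exact h1.symm
  have hpyth : ∀ v : H, ‖v‖ ^ 2 = ‖v - P v‖ ^ 2 + ‖P v‖ ^ 2 := by
    intro v
    have h0 : ⟪v - P v, P v⟫ = 0 := hQP v v
    calc ‖v‖ ^ 2 = ‖(v - P v) + P v‖ ^ 2 := by rw [sub_add_cancel]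
      _ = ‖v - P v‖ ^ 2 + 2 * ⟪v - P v, P v⟫ + ‖P v‖ ^ 2 := norm_add_sq_real _ _
      _ = ‖v - P v‖ ^ 2 + ‖P v‖ ^ 2 := by rw [h0]; ring
  have hQle : ∀ v : H, ‖v - P v‖ ≤ ‖v‖ := by
    intro v
    have := hpyth v
    nlinarith [norm_nonneg (v - P v), norm_nonneg v, sq_nonneg ‖P v‖]
  -- the pointwise kernel identity
  have hkxx : ∀ x, k x x = ‖φ x‖ ^ 2 := fun x => by
    rw [hk]; exact real_inner_self_eq_norm_sq _
  have hkernel : ∀ x, k x x - kZ x x = ‖φ x - P (φ x)‖ ^ 2 := by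
    intro x
    obtain ⟨α, hα⟩ := (Submodule.mem_span_range_iff_exists_fun ℝ).mp (hrange (φ x))
    have hGsym : Gᵀ = G := by
      ext a b
      simp only [Matrix.transpose_apply, hG, hk]
      exact real_inner_comm _ _
    have hc : (fun a => k x (Z a)) = G.mulVec α := by
      funext a
      have h1 : ⟪P (φ x), φ (Z a)⟫ = ⟪φ x, φ (Z a)⟫ := by rw [hsym, hfix]
      calc k x (Z a) = ⟪P (φ x), φ (Z a)⟫ := by rw [hk, ← h1]
        _ = ⟪∑ b, α b • φ (Z b), φ (Z a)⟫ := by rw [hα]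
        _ = ∑ b, α b * ⟪φ (Z b), φ (Z a)⟫ := by
            rw [sum_inner]; simp [real_inner_smul_left]
        _ = G.mulVec α a := by
            simp only [Matrix.mulVec, dotProduct, hG, hk]
            refine Finset.sum_congr rfl fun b _ => ?_
            rw [real_inner_comm]; ring
    have hkZx : kZ x x = (G.mulVec α) ⬝ᵥ Kp.mulVec (G.mulVec α) := by
      rw [hkZ, ← hc]
      simp only [dotProduct, Matrix.mulVec, Finset.mul_sum]
      refine Finset.sum_congr rfl fun a _ => Finset.sum_congr rfl fun b _ => ?_
      rw [hk (Z b) x, real_inner_comm, ← hk x (Z b)]; ring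
    have hmat : (G.mulVec α) ⬝ᵥ Kp.mulVec (G.mulVec α) = α ⬝ᵥ G.mulVec α := by
      have hGv : G.mulVec α = α ᵥ* G := by rw [← Matrix.mulVec_transpose, hGsym]
      calc G.mulVec α ⬝ᵥ Kp.mulVec (G.mulVec α)
          = (α ᵥ* G) ⬝ᵥ ((Kp * G).mulVec α) := by rw [Matrix.mulVec_mulVec, hGv]
        _ = ((α ᵥ* G) ᵥ* (Kp * G)) ⬝ᵥ α := by rw [dotProduct_mulVec]
        _ = (α ᵥ* (G * (Kp * G))) ⬝ᵥ α := by rw [Matrix.vecMul_vecMul]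
        _ = (α ᵥ* G) ⬝ᵥ α := by rw [← mul_assoc, hKp.1]
        _ = α ⬝ᵥ G.mulVec α := by rw [← dotProduct_mulVec]
    have hnormP : α ⬝ᵥ G.mulVec α = ‖P (φ x)‖ ^ 2 := by
      rw [← real_inner_self_eq_norm_sq, ← hα]
      rw [sum_inner]
      simp only [dotProduct, Matrix.mulVec, inner_sum, real_inner_smul_left,
        real_inner_smul_right, Finset.mul_sum]
      refine Finset.sum_congr rfl fun a _ => Finset.sum_congr rfl fun b _ => ?_
      rw [hG, hk]; ring
    have := hpyth (φ x)
    rw [hkxx, hkZx, hmat, hnormP]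
    linarith

  -- measurability and integrability infrastructure
  have hcmeas : ∀ i : ℕ, StronglyMeasurable (fun x => ⟪h i, φ x⟫) := fun i =>
    (innerSL ℝ (h i)).continuous.comp_stronglyMeasurable hφ
  have hbnd : ∀ (i : ℕ) (x : 𝒳), |⟪h i, φ x⟫| ≤ ‖φ x‖ := by
    intro i x
    calc |⟪h i, φ x⟫| ≤ ‖h i‖ * ‖φ x‖ := abs_real_inner_le_norm _ _
      _ = ‖φ x‖ := by rw [hon.1 i, one_mul]
  have hprod_int : ∀ i j : ℕ, Integrable (fun x => ⟪h i, φ x⟫ * ⟪h j, φ x⟫) μ := by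
    intro i j
    refine hkint.mono' (((hcmeas i).mul (hcmeas j)).aestronglyMeasurable) ?_
    filter_upwards with x
    rw [hkxx, Real.norm_eq_abs, abs_mul]
    calc |⟪h i, φ x⟫| * |⟪h j, φ x⟫| ≤ ‖φ x‖ * ‖φ x‖ :=
        mul_le_mul (hbnd i x) (hbnd j x) (abs_nonneg _) (norm_nonneg _)
      _ = ‖φ x‖ ^ 2 := (sq ‖φ x‖).symm
  have hσnn : ∀ i, 0 ≤ σ i := fun i => by
    rw [hσ]; exact integral_nonneg fun x => sq_nonneg _
  set g : ℕ → ℝ := fun i => σ i * ‖h i - P (h i)‖ ^ 2 with hg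
  have hgnn : ∀ i, 0 ≤ g i := fun i => mul_nonneg (hσnn i) (sq_nonneg _)
  have hgle : ∀ i, g i ≤ σ i := by
    intro i
    have h1 : ‖h i - P (h i)‖ ≤ 1 := by
      calc ‖h i - P (h i)‖ ≤ ‖h i‖ := hQle _
        _ = 1 := hon.1 i
    have h2 : ‖h i - P (h i)‖ ^ 2 ≤ 1 := by nlinarith [norm_nonneg (h i - P (h i))]
    calc g i = σ i * ‖h i - P (h i)‖ ^ 2 := rfl
      _ ≤ σ i * 1 := mul_le_mul_of_nonneg_left h2 (hσnn i)
      _ = σ i := mul_one _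
  have hgsum : Summable g := Summable.of_nonneg_of_le hgnn hgle hσsum
  -- convergence of partial Fourier sums to φ x
  have hsum_phi : ∀ x, Filter.Tendsto (fun n => ∑ i ∈ Finset.range n, ⟪h i, φ x⟫ • h i)
      Filter.atTop (nhds (φ x)) := by
    set U := (Submodule.span ℝ (Set.range h)).topologicalClosure with hU
    have hhU : ∀ i, h i ∈ U :=
      fun i => Submodule.le_topologicalClosure _ (Submodule.subset_span ⟨i, rfl⟩)
    have hUc : IsClosed (U : Set H) := Submodule.isClosed_topologicalClosure _
    haveI : CompleteSpace U := hUc.completeSpace_coe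
    set h' : ℕ → U := fun i => ⟨h i, hhU i⟩ with hh'
    have hon' : Orthonormal ℝ h' := by
      rw [orthonormal_iff_ite] at hon ⊢
      intro i j
      rw [Submodule.coe_inner]
      exact hon i j
    have hdense : ⊤ ≤ (Submodule.span ℝ (Set.range h')).topologicalClosure := by
      intro u _
      have himg : (((↑) : U → H) '' ((Submodule.span ℝ (Set.range h') : Submodule ℝ U) : Set U))
          = ((Submodule.span ℝ (Set.range h) : Submodule ℝ H) : Set H) := by
        have hmap := Submodule.map_span (U.subtype) (Set.range h')
        calc (((↑) : U → H) '' ((Submodule.span ℝ (Set.range h') : Submodule ℝ U) : Set U))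
            = (((Submodule.span ℝ (Set.range h')).map U.subtype : Submodule ℝ H) : Set H) := by
              rw [Submodule.map_coe]; rfl
          _ = ((Submodule.span ℝ (U.subtype '' Set.range h') : Submodule ℝ H) : Set H) := by
              rw [hmap]
          _ = _ := by
              congr 2
              rw [← Set.range_comp]
              rfl
      have hmem : (u : H) ∈ closure ((((↑) : U → H)) ''
          ((Submodule.span ℝ (Set.range h') : Submodule ℝ U) : Set U)) := by
        rw [himg]; exact u.2
      exact (closure_subtype).mpr hmem
    set b : HilbertBasis ℕ ℝ U := HilbertBasis.mk hon' hdense with hbdef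
    have hb : ∀ i, (b i : H) = h i := fun i => by
      rw [hbdef, HilbertBasis.coe_mk]
    intro x
    have hs := b.hasSum_orthogonalProjectionOnto (φ x)
    have hproj : U.orthogonalProjectionOnto (φ x) = ⟨φ x, hspan x⟩ :=
      Submodule.orthogonalProjectionOnto_mem_subspace_eq_self (⟨φ x, hspan x⟩ : U)
    have hs2 := U.subtypeL.hasSum hs
    have hs3 : HasSum (fun i => ⟪h i, φ x⟫ • h i) (φ x) := by
      simpa only [_root_.map_smul, Submodule.subtypeL_apply, hb, hproj] using hs2
    exact hs3.tendsto_sum_nat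
  -- the approximating sequence of integrands
  set F : ℕ → 𝒳 → ℝ := fun n x =>
    ‖(∑ i ∈ Finset.range n, ⟪h i, φ x⟫ • h i) -
      P (∑ i ∈ Finset.range n, ⟪h i, φ x⟫ • h i)‖ ^ 2 with hF
  have hSmeas : ∀ n, StronglyMeasurable fun x => ∑ i ∈ Finset.range n, ⟪h i, φ x⟫ • h i := by
    intro n
    refine Finset.stronglyMeasurable_fun_sum _ fun i _ => ?_
    exact (hcmeas i).smul_const (h i)
  have hFmeas : ∀ n, AEStronglyMeasurable (F n) μ := by
    intro n
    exact ((((hSmeas n).sub (P.continuous.comp_stronglyMeasurable (hSmeas n))).norm).pow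
      2).aestronglyMeasurable
  have hFbound : ∀ n, ∀ x, ‖F n x‖ ≤ k x x := by
    intro n x
    rw [Real.norm_eq_abs, abs_of_nonneg (sq_nonneg _), hkxx]
    have h1 : ‖(∑ i ∈ Finset.range n, ⟪h i, φ x⟫ • h i) -
        P (∑ i ∈ Finset.range n, ⟪h i, φ x⟫ • h i)‖ ≤
        ‖∑ i ∈ Finset.range n, ⟪h i, φ x⟫ • h i‖ := hQle _
    have h2 : ‖∑ i ∈ Finset.range n, ⟪h i, φ x⟫ • h i‖ ^ 2 ≤ ‖φ x‖ ^ 2 := by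
      have he : ‖∑ i ∈ Finset.range n, ⟪h i, φ x⟫ • h i‖ ^ 2
          = ∑ i ∈ Finset.range n, ‖⟪h i, φ x⟫‖ ^ 2 := by
        rw [← real_inner_self_eq_norm_sq,
          hon.inner_sum (fun i => ⟪h i, φ x⟫) (fun i => ⟪h i, φ x⟫) (Finset.range n)]
        refine Finset.sum_congr rfl fun i _ => ?_
        rw [Real.norm_eq_abs, sq_abs, sq]
        simp [starRingEnd_apply]
      rw [he]
      exact hon.sum_inner_products_le (φ x)
    calc F n x ≤ ‖∑ i ∈ Finset.range n, ⟪h i, φ x⟫ • h i‖ ^ 2 := by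
          rw [hF]
          exact pow_le_pow_left₀ (norm_nonneg _) h1 2
      _ ≤ ‖φ x‖ ^ 2 := h2
  have hlim : ∀ x, Filter.Tendsto (fun n => F n x) Filter.atTop
      (nhds (‖φ x - P (φ x)‖ ^ 2)) := by
    intro x
    have hc : Continuous fun v : H => ‖v - P v‖ ^ 2 :=
      ((continuous_id.sub P.continuous).norm).pow 2
    exact (hc.tendsto (φ x)).comp (hsum_phi x)
  have hFint : ∀ n, ∫ x, F n x ∂μ = ∑ i ∈ Finset.range n, g i := by
    intro n
    have hFx : ∀ x, F n x = ∑ i ∈ Finset.range n, ∑ j ∈ Finset.range n,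
        ⟪h i, φ x⟫ * ⟪h j, φ x⟫ * ⟪h i - P (h i), h j - P (h j)⟫ := by
      intro x
      have e1 : (∑ i ∈ Finset.range n, ⟪h i, φ x⟫ • h i) -
          P (∑ i ∈ Finset.range n, ⟪h i, φ x⟫ • h i)
          = ∑ i ∈ Finset.range n, ⟪h i, φ x⟫ • (h i - P (h i)) := by
        rw [map_sum]
        rw [← Finset.sum_sub_distrib]
        refine Finset.sum_congr rfl fun i _ => ?_
        rw [_root_.map_smul, smul_sub]
      rw [hF]
      simp only []
      rw [e1, ← real_inner_self_eq_norm_sq, sum_inner]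
      simp only [inner_sum, real_inner_smul_left, real_inner_smul_right, Finset.mul_sum]
      exact Finset.sum_congr rfl fun i _ => Finset.sum_congr rfl fun j _ => by ring
    calc ∫ x, F n x ∂μ = ∫ x, ∑ i ∈ Finset.range n, ∑ j ∈ Finset.range n,
        ⟪h i, φ x⟫ * ⟪h j, φ x⟫ * ⟪h i - P (h i), h j - P (h j)⟫ ∂μ :=
          integral_congr_ae (Filter.Eventually.of_forall hFx)
      _ = ∑ i ∈ Finset.range n, ∑ j ∈ Finset.range n,
          (∫ x, ⟪h i, φ x⟫ * ⟪h j, φ x⟫ ∂μ) * ⟪h i - P (h i), h j - P (h j)⟫ := by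
          rw [integral_finset_sum _ (fun i _ =>
            integrable_finset_sum _ fun j _ => (hprod_int i j).mul_const _)]
          refine Finset.sum_congr rfl fun i _ => ?_
          rw [integral_finset_sum _ (fun j _ => (hprod_int i j).mul_const _)]
          exact Finset.sum_congr rfl fun j _ => integral_mul_const _ _
      _ = ∑ i ∈ Finset.range n, g i := by
          refine Finset.sum_congr rfl fun i hi => ?_
          rw [Finset.sum_eq_single_of_mem i hi]
          · rw [show (∫ x, ⟪h i, φ x⟫ * ⟪h i, φ x⟫ ∂μ) = σ i by
              rw [hσ]; exact integral_congr_ae (Filter.Eventually.of_forall fun x => by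
                simp [sq])]
            rw [real_inner_self_eq_norm_sq]
          · intro j _ hj
            rw [horth i j (fun e => hj e.symm), zero_mul]
  -- dominated convergence
  have hmain : Filter.Tendsto (fun n => ∑ i ∈ Finset.range n, g i) Filter.atTop
      (nhds (∫ x, ‖φ x - P (φ x)‖ ^ 2 ∂μ)) := by
    have := MeasureTheory.tendsto_integral_of_dominated_convergence (fun x => k x x)
      hFmeas hkint (fun n => Filter.Eventually.of_forall (hFbound n))
      (Filter.Eventually.of_forall hlim)
    simpa only [hFint] using this
  have hpart2 : (∫ x, ‖φ x - P (φ x)‖ ^ 2 ∂μ) = ∑' i, g i :=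
    tendsto_nhds_unique hmain hgsum.hasSum.tendsto_sum_nat
  have hpart1 : (∫ x, (k x x - kZ x x) ∂μ) = ∫ x, ‖φ x - P (φ x)‖ ^ 2 ∂μ :=
    integral_congr_ae (Filter.Eventually.of_forall fun x => hkernel x)
  refine ⟨hpart1, hpart1.trans hpart2, fun m => ?_⟩
  rw [hpart1, hpart2, ← Summable.sum_add_tsum_nat_add m hgsum]
  refine add_le_add (le_refl _) ?_
  refine Summable.tsum_le_tsum (fun i => ?_) ((summable_nat_add_iff m).2 hgsum)
    (by simpa [add_comm] using (summable_nat_add_iff m).2 hσsum)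
  calc g (i + m) ≤ σ (i + m) := hgle _
    _ = σ (m + i) := by rw [add_comm]
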